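/- arXiv:cs/0502042 — 2 statements merged into one kernel-verified Lean document; each statement's English description precedes it below -/
import Mathlib

section
/- (Rank-one update of resolvent trace, Silverstein–Bai Lemma 2.6) For z ∈ ℂ⁺, N×N Hermitian matrices A and B, τ ∈ ℝ, and q ∈ ℂ^N: |tr(((B - zI)⁻¹ - (B + τ qq† - zI)⁻¹)A)| ≤ ‖A‖ / Im(z). -/
open Matrix


private lemma dot_self_eq_normSq {N : ℕ} (v : Fin N → ℂ) :
    star v ⬝ᵥ v = ((‖(WithLp.equiv 2 (Fin N → ℂ)).symm v‖ : ℝ) : ℂ) ^ 2 := by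
  have : star v ⬝ᵥ v = inner ℂ ((WithLp.equiv 2 (Fin N → ℂ)).symm v)
      ((WithLp.equiv 2 (Fin N → ℂ)).symm v) := by rw [dotProduct_comm]; rfl
  rw [this, inner_self_eq_norm_sq_to_K]
  norm_cast

private lemma trace_vecMulVec_mul {N : ℕ} (u w : Fin N → ℂ) (M : Matrix (Fin N) (Fin N) ℂ) :
    (vecMulVec u w * M).trace = w ⬝ᵥ (M *ᵥ u) := by
  simp only [trace, diag, mul_apply, vecMulVec_apply, dotProduct, mulVec]
  rw [Finset.sum_comm]
  refine Finset.sum_congr rfl fun j _ => ?_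
  rw [Finset.mul_sum]
  exact Finset.sum_congr rfl fun i _ => by ring

private lemma isUnit_det_sub_smul {N : ℕ} {M : Matrix (Fin N) (Fin N) ℂ}
    (hM : M.IsHermitian) {z : ℂ} (hz : z.im ≠ 0) :
    IsUnit (M - z • (1 : Matrix (Fin N) (Fin N) ℂ)).det := by
  rw [← isUnit_iff_isUnit_det, ← mulVec_injective_iff_isUnit]
  have key : ∀ v, (M - z • (1 : Matrix (Fin N) (Fin N) ℂ)) *ᵥ v = 0 → v = 0 := by
    intro v hv
    by_contra hv0
    have h1 : M *ᵥ v = z • v := by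
      rw [sub_mulVec, smul_mulVec, one_mulVec, sub_eq_zero] at hv
      exact hv
    have h2 : star v ⬝ᵥ (M *ᵥ v) = z * (star v ⬝ᵥ v) := by
      rw [h1, dotProduct_smul, smul_eq_mul]
    have hconj : (starRingEnd ℂ) (star v ⬝ᵥ (M *ᵥ v)) = star v ⬝ᵥ (M *ᵥ v) := by
      calc (starRingEnd ℂ) (star v ⬝ᵥ (M *ᵥ v))
          = star (star v ⬝ᵥ (M *ᵥ v)) := rfl
        _ = star (M *ᵥ v) ⬝ᵥ v := by rw [star_dotProduct, star_star]
        _ = (star v ᵥ* Mᴴ) ⬝ᵥ v := by rw [star_mulVec]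
        _ = (star v ᵥ* M) ⬝ᵥ v := by rw [hM.eq]
        _ = star v ⬝ᵥ (M *ᵥ v) := by rw [dotProduct_mulVec]
    have him : (star v ⬝ᵥ (M *ᵥ v)).im = 0 := Complex.conj_eq_iff_im.mp hconj
    set r : ℝ := ‖(WithLp.equiv 2 (Fin N → ℂ)).symm v‖ with hr
    have hrv : star v ⬝ᵥ v = (r : ℂ) ^ 2 := dot_self_eq_normSq v
    have hrpos : 0 < r := by
      have : (WithLp.equiv 2 (Fin N → ℂ)).symm v ≠ 0 := by
        simpa using hv0
      exact norm_pos_iff.mpr this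
    rw [h2, hrv, ← Complex.ofReal_pow] at him
    simp only [Complex.mul_im, Complex.ofReal_im, Complex.ofReal_re, mul_zero, zero_add] at him
    rcases mul_eq_zero.mp him with h | h
    · exact hz h
    · exact absurd h (by positivity)
  intro x y hxy
  have : (M - z • (1 : Matrix (Fin N) (Fin N) ℂ)) *ᵥ (x - y) = 0 := by
    rw [mulVec_sub, hxy, sub_self]
  have := key _ this
  exact sub_eq_zero.mp this

set_option maxHeartbeats 1000000 in
/-- Silverstein–Bai Lemma 2.6 (rank-one update of resolvent trace): for `z ∈ ℂ⁺`,
Hermitian `A`, `B`, `τ ∈ ℝ` and `q ∈ ℂ^N`,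
`|tr(((B - zI)⁻¹ - (B + τ qq† - zI)⁻¹)A)| ≤ ‖A‖ / Im(z)`. -/
theorem rank_one_resolvent_trace_bound {N : ℕ} (z : ℂ) (hz : 0 < z.im)
    (A B : Matrix (Fin N) (Fin N) ℂ) (hA : A.IsHermitian) (hB : B.IsHermitian)
    (τ : ℝ) (q : Fin N → ℂ) :
    Norm.norm
        ((((B - z • (1 : Matrix (Fin N) (Fin N) ℂ))⁻¹ -
            (B + (τ : ℂ) • vecMulVec q (star q) - z • (1 : Matrix (Fin N) (Fin N) ℂ))⁻¹) * A).trace)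
      ≤ ‖Matrix.toEuclideanCLM (𝕜 := ℂ) A‖ / z.im := by
  have hzne : z.im ≠ 0 := ne_of_gt hz
  set V : Matrix (Fin N) (Fin N) ℂ := vecMulVec q (star q) with hVdef
  set M₁ : Matrix (Fin N) (Fin N) ℂ := B - z • 1 with hM₁
  set M₂ : Matrix (Fin N) (Fin N) ℂ := B + (τ : ℂ) • V - z • 1 with hM₂
  -- Hermitian facts
  have hV : V.IsHermitian := by
    ext i j
    simp [hVdef, conjTranspose_apply, vecMulVec_apply, mul_comm]
  have hτV : ((τ : ℂ) • V).IsHermitian := by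
    unfold Matrix.IsHermitian
    rw [conjTranspose_smul, hV.eq, Complex.star_def, Complex.conj_ofReal]
  -- invertibility
  have hdet1 : IsUnit M₁.det := isUnit_det_sub_smul hB hzne
  have hdet2 : IsUnit M₂.det := isUnit_det_sub_smul (hB.add hτV) hzne
  set R₁ : Matrix (Fin N) (Fin N) ℂ := M₁⁻¹ with hR₁
  set R₂ : Matrix (Fin N) (Fin N) ℂ := M₂⁻¹ with hR₂
  have h11 : M₁ * R₁ = 1 := mul_nonsing_inv _ hdet1
  have h12 : R₁ * M₁ = 1 := nonsing_inv_mul _ hdet1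
  have h21 : M₂ * R₂ = 1 := mul_nonsing_inv _ hdet2
  have h22 : R₂ * M₂ = 1 := nonsing_inv_mul _ hdet2
  -- resolvent identity
  have hdiffM : M₂ - M₁ = (τ : ℂ) • V := by
    rw [hM₂, hM₁]; abel
  have hdiff : R₁ - R₂ = R₂ * ((τ : ℂ) • V) * R₁ := by
    rw [← hdiffM, mul_sub, sub_mul, h22, one_mul, mul_assoc, h11, mul_one]
  -- trace formula
  set u : Fin N → ℂ := R₁ *ᵥ q with hu_def
  have htr : ((R₁ - R₂) * A).trace = (τ : ℂ) * (star q ⬝ᵥ ((R₁ * A * R₂) *ᵥ q)) := by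
    rw [hdiff]
    have e1 : R₂ * ((τ : ℂ) • V) * R₁ * A = (τ : ℂ) • (R₂ * (V * (R₁ * A))) := by
      simp [Matrix.mul_smul, Matrix.smul_mul, mul_assoc]
    rw [e1, trace_smul, smul_eq_mul]
    congr 1
    rw [trace_mul_comm]
    rw [show V * (R₁ * A) * R₂ = vecMulVec q (star q) * (R₁ * A * R₂) by
      rw [hVdef, mul_assoc]]
    rw [trace_vecMulVec_mul]
  -- Sherman-Morrison
  have hq : M₁ *ᵥ u = q := by rw [hu_def, mulVec_mulVec, h11, one_mulVec]
  set c : ℂ := star q ⬝ᵥ u with hc_def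
  have hVu : V *ᵥ u = c • q := by
    ext i
    simp only [hVdef, mulVec, dotProduct, vecMulVec_apply, Pi.smul_apply, smul_eq_mul, hc_def]
    rw [Finset.sum_mul]
    exact Finset.sum_congr rfl fun j _ => by ring
  set d : ℂ := 1 + (τ : ℂ) * c with hd_def
  have hM2u : M₂ *ᵥ u = d • q := by
    have e : M₂ = M₁ + (τ : ℂ) • V := by rw [hM₂, hM₁]; abel
    rw [e, add_mulVec, hq, smul_mulVec, hVu, smul_smul, hd_def]
    ext i; simp; ring
  have hu_eq : u = d • (R₂ *ᵥ q) := by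
    have h := congrArg (fun w => R₂ *ᵥ w) hM2u
    simpa [mulVec_mulVec, h22, one_mulVec, mulVec_smul] using h
  -- trivial cases
  rcases eq_or_ne τ 0 with hτ0 | hτ0
  · rw [htr, hτ0]
    simp only [Complex.ofReal_zero, zero_mul, norm_zero]
    exact div_nonneg (norm_nonneg _) hz.le
  rcases eq_or_ne q 0 with hq0 | hq0
  · rw [htr, hq0]
    simp only [star_zero, zero_dotProduct, mul_zero, norm_zero]
    exact div_nonneg (norm_nonneg _) hz.le
  -- nontrivial case
  have hu0 : u ≠ 0 := fun h => hq0 (by rw [← hq, h, mulVec_zero])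
  set nu : ℝ := ‖(WithLp.equiv 2 (Fin N → ℂ)).symm u‖ with hnu
  have hnupos : 0 < nu := norm_pos_iff.mpr (by simpa using hu0)
  -- conjugate transpose of M₁
  have hM1H : M₁ᴴ = B - (starRingEnd ℂ z) • 1 := by
    rw [hM₁, conjTranspose_sub, hB.eq, conjTranspose_smul, conjTranspose_one]
    rfl
  -- imaginary part of c
  have hcim : c.im = z.im * nu ^ 2 := by
    have e1 : c = star u ⬝ᵥ (M₁ᴴ *ᵥ u) := by
      rw [hc_def, ← hq, star_mulVec]
      exact (dotProduct_mulVec (star u) M₁ᴴ u).symm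
    have e2 : (starRingEnd ℂ) c = star u ⬝ᵥ (M₁ *ᵥ u) := by
      calc (starRingEnd ℂ) c = star (star q ⬝ᵥ u) := by rw [hc_def]; rfl
        _ = star u ⬝ᵥ q := by rw [star_dotProduct, star_star]
        _ = star u ⬝ᵥ (M₁ *ᵥ u) := by rw [hq]
    have e3 : c - (starRingEnd ℂ) c = (z - starRingEnd ℂ z) * ((nu : ℂ)) ^ 2 := by
      rw [e2, e1, ← dotProduct_sub, ← sub_mulVec, hM1H, hM₁]
      have : B - (starRingEnd ℂ z) • (1 : Matrix (Fin N) (Fin N) ℂ) - (B - z • 1)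
          = (z - starRingEnd ℂ z) • (1 : Matrix (Fin N) (Fin N) ℂ) := by
        rw [sub_smul]; abel
      rw [this, smul_mulVec, one_mulVec, dotProduct_smul, smul_eq_mul,
        dot_self_eq_normSq, ← hnu]
    have := congrArg Complex.im e3
    simp only [Complex.sub_im, Complex.conj_im, ← Complex.ofReal_pow, Complex.mul_im,
      Complex.ofReal_im, Complex.ofReal_re, mul_zero, zero_add, Complex.sub_re,
      Complex.conj_re, sub_self, zero_mul] at this
    linarith
  -- d is nonzero, with a lower bound on |d|
  have hdim : d.im = τ * (z.im * nu ^ 2) := by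
    rw [hd_def]
    simp [Complex.add_im, Complex.mul_im, hcim]
  have hdabs : |τ| * (z.im * nu ^ 2) ≤ ‖d‖ := by
    calc |τ| * (z.im * nu ^ 2) = |d.im| := by
          rw [hdim, abs_mul, abs_of_pos (by positivity : (0:ℝ) < z.im * nu ^ 2)]
      _ ≤ ‖d‖ := Complex.abs_im_le_norm d
  have hdpos : 0 < ‖d‖ := lt_of_lt_of_le (by positivity) hdabs
  have hdne : d ≠ 0 := by
    intro h; rw [h] at hdpos; simp at hdpos
  -- R₂ q in terms of u
  have hR2q : R₂ *ᵥ q = d⁻¹ • u := by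
    rw [hu_eq, smul_smul, inv_mul_cancel₀ hdne, one_smul]
  -- commutation of R₁ and R₁ᴴ
  have hMM : M₁ * M₁ᴴ = M₁ᴴ * M₁ := by
    rw [hM1H, hM₁]
    simp only [Matrix.sub_mul, Matrix.mul_sub, Matrix.smul_mul, Matrix.mul_smul,
      Matrix.one_mul, Matrix.mul_one, smul_sub, sub_smul, smul_smul]
    rw [mul_comm ((starRingEnd ℂ) z) z]
    abel
  have hcomm : R₁ * R₁ᴴ = R₁ᴴ * R₁ := by
    have h := congrArg Inv.inv hMM
    rw [Matrix.mul_inv_rev, Matrix.mul_inv_rev] at h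
    rw [hR₁, conjTranspose_nonsing_inv]
    exact h.symm
  -- the vector w and its norm
  set w : Fin N → ℂ := R₁ᴴ *ᵥ q with hw_def
  set nw : ℝ := ‖(WithLp.equiv 2 (Fin N → ℂ)).symm w‖ with hnw
  have hnwu : nw = nu := by
    have e1 : ((nw : ℂ)) ^ 2 = star q ⬝ᵥ ((R₁ * R₁ᴴ) *ᵥ q) := by
      rw [← dot_self_eq_normSq w, hw_def, star_mulVec, conjTranspose_conjTranspose,
        dotProduct_mulVec, vecMul_vecMul, ← dotProduct_mulVec]
    have e2 : ((nu : ℂ)) ^ 2 = star q ⬝ᵥ ((R₁ᴴ * R₁) *ᵥ q) := by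
      rw [← dot_self_eq_normSq u, hu_def, star_mulVec,
        dotProduct_mulVec, vecMul_vecMul, ← dotProduct_mulVec]
    have e3 : ((nw : ℂ)) ^ 2 = ((nu : ℂ)) ^ 2 := by rw [e1, e2, hcomm]
    have e4 : nw ^ 2 = nu ^ 2 := by exact_mod_cast e3
    nlinarith [norm_nonneg ((WithLp.equiv 2 (Fin N → ℂ)).symm w), hnupos]
  -- the inner product bound
  set S : ℂ := star q ⬝ᵥ ((R₁ * A) *ᵥ u) with hS_def
  have hSbound : ‖S‖ ≤ ‖Matrix.toEuclideanCLM (𝕜 := ℂ) A‖ * nu ^ 2 := by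
    have eS : S = inner ℂ ((WithLp.equiv 2 (Fin N → ℂ)).symm w)
        ((Matrix.toEuclideanCLM (𝕜 := ℂ) A) ((WithLp.equiv 2 (Fin N → ℂ)).symm u)) := by
      rw [hS_def]
      show _ = (A *ᵥ u) ⬝ᵥ star w
      rw [dotProduct_comm (A *ᵥ u), hw_def, star_mulVec, conjTranspose_conjTranspose,
        ← mulVec_mulVec, dotProduct_mulVec]
    rw [eS]
    calc ‖(inner ℂ ((WithLp.equiv 2 (Fin N → ℂ)).symm w)
        ((Matrix.toEuclideanCLM (𝕜 := ℂ) A) ((WithLp.equiv 2 (Fin N → ℂ)).symm u)) : ℂ)‖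
        ≤ ‖(WithLp.equiv 2 (Fin N → ℂ)).symm w‖ *
            ‖(Matrix.toEuclideanCLM (𝕜 := ℂ) A) ((WithLp.equiv 2 (Fin N → ℂ)).symm u)‖ :=
          norm_inner_le_norm _ _
      _ ≤ nw * (‖Matrix.toEuclideanCLM (𝕜 := ℂ) A‖ * nu) := by
          apply mul_le_mul_of_nonneg_left _ (norm_nonneg _)
          exact ContinuousLinearMap.le_opNorm _ _
      _ = ‖Matrix.toEuclideanCLM (𝕜 := ℂ) A‖ * nu ^ 2 := by rw [hnwu]; ring
  -- final computation
  have hval : ((R₁ - R₂) * A).trace = (τ : ℂ) * d⁻¹ * S := by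
    rw [htr]
    have : (R₁ * A * R₂) *ᵥ q = d⁻¹ • ((R₁ * A) *ᵥ u) := by
      rw [← mulVec_mulVec, hR2q, mulVec_smul]
    rw [this, dotProduct_smul, smul_eq_mul, hS_def]
    ring
  rw [hval]
  rw [norm_mul, norm_mul, norm_inv]
  have habsτ : ‖((τ : ℂ))‖ = |τ| := by rw [Complex.norm_real, Real.norm_eq_abs]
  rw [habsτ]
  have hτpos : 0 < |τ| := abs_pos.mpr hτ0
  calc |τ| * (‖d‖)⁻¹ * ‖S‖
      = |τ| * ‖S‖ / ‖d‖ := by ring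
    _ ≤ |τ| * (‖Matrix.toEuclideanCLM (𝕜 := ℂ) A‖ * nu ^ 2) / (|τ| * (z.im * nu ^ 2)) := by
        apply div_le_div₀ (by positivity) _ (by positivity) hdabs
        exact mul_le_mul_of_nonneg_left hSbound (le_of_lt hτpos)
    _ = ‖Matrix.toEuclideanCLM (𝕜 := ℂ) A‖ / z.im := by
        rw [mul_div_mul_left _ _ (ne_of_gt hτpos),
          mul_comm (‖Matrix.toEuclideanCLM (𝕜 := ℂ) A‖) (nu ^ 2), mul_comm z.im (nu ^ 2),
          mul_div_mul_left _ _ (by positivity : (nu : ℝ) ^ 2 ≠ 0)]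
end

section
/- For the limiting exponential-window distribution with CDF F_W(w) = 1 + (L̄/η) ln w on [e^{-η/L̄}, 1] and any real r > 0: E[W/|1+rW|²] = E[W]/((1+r)(1+e^{-η/L̄} r)), where E[W] = (L̄/η)(1 - e^{-η/L̄}). -/
open MeasureTheory

/-- For the limiting exponential-window distribution with density `(L̄/η)/w` on
`[e^{-η/L̄}, 1]` and `r > 0`:
`E[W/(1+rW)²] = E[W]/((1+r)(1+e^{-η/L̄} r))` where `E[W] = (L̄/η)(1 - e^{-η/L̄})`. -/
theorem exp_window_W12 (η L r : ℝ) (hη : 0 < η) (hL : 0 < L) (hr : 0 < r) :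
    ∫ w in Set.Icc (Real.exp (-η / L)) 1, (L / η / w) * (w / (1 + r * w) ^ 2) =
      ((L / η) * (1 - Real.exp (-η / L))) / ((1 + r) * (1 + Real.exp (-η / L) * r)) := by
  set a := Real.exp (-η / L) with ha
  have ha0 : 0 < a := Real.exp_pos _
  have ha1 : a ≤ 1 := by
    rw [ha, Real.exp_le_one_iff]
    have : 0 < η / L := div_pos hη hL
    rw [neg_div]; linarith
  have hpos : ∀ w ∈ Set.Icc a 1, 0 < 1 + r * w := by
    intro w hw
    nlinarith [hw.1, hw.2]
  have hcong : ∫ w in Set.Icc a 1, (L / η / w) * (w / (1 + r * w) ^ 2)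
      = ∫ w in Set.Icc a 1, (L / η) / (1 + r * w) ^ 2 := by
    refine setIntegral_congr_fun measurableSet_Icc (fun w hw => ?_)
    have hw0 : 0 < w := lt_of_lt_of_le ha0 hw.1
    have hd : (0:ℝ) < 1 + r * w := hpos w hw
    field_simp
  rw [hcong, integral_Icc_eq_integral_Ioc, ← intervalIntegral.integral_of_le ha1]
  have huIcc : Set.uIcc a 1 = Set.Icc a 1 := Set.uIcc_of_le ha1
  have hderiv : ∀ w ∈ Set.uIcc a 1,
      HasDerivAt (fun w => -(L / η) / (r * (1 + r * w))) ((L / η) / (1 + r * w) ^ 2) w := by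
    intro w hw
    rw [huIcc] at hw
    have hd : (0:ℝ) < 1 + r * w := hpos w hw
    have h1 : HasDerivAt (fun w : ℝ => r * (1 + r * w)) (r * r) w := by
      have : HasDerivAt (fun w : ℝ => 1 + r * w) r w := by
        simpa using ((hasDerivAt_id w).const_mul r).const_add 1
      simpa using this.const_mul r
    have h2 := (h1.inv (by positivity)).const_mul (-(L / η))
    convert h2 using 1
    · rfl
    · rfl
    · funext y; simp [div_eq_mul_inv]
    · field_simp
  have hcont : IntervalIntegrable (fun w => (L / η) / (1 + r * w) ^ 2) volume a 1 := by
    apply ContinuousOn.intervalIntegrable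
    apply ContinuousOn.div continuousOn_const (by fun_prop)
    intro w hw
    rw [huIcc] at hw
    have := hpos w hw
    positivity
  rw [intervalIntegral.integral_eq_sub_of_hasDerivAt hderiv hcont]
  have h1r : (0:ℝ) < 1 + r := by linarith
  have h2r : (0:ℝ) < 1 + r * a := by nlinarith
  field_simp
  ring
end
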